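/- Let (X,δ) be a nonempty metric space carrying a uniformly bounded Borel measure μ. Then for any x ∈ X, d∞(X) = limsup_{R→∞} (log μ(B(x,R)))/(log R). -/

import Mathlib

open Metric Filter Topology Set

/-- Logarithm of an extended natural number, valued in `EReal` (`⊤` for `⊤`). -/
noncomputable def elog (n : ℕ∞) : EReal :=
  if n = ⊤ then ⊤ else ((Real.log (n.toNat : ℝ) : ℝ) : EReal)

/-- `coverNum r Ω` : the least number of open balls of radius `r` needed to cover `Ω`,
valued in `ℕ∞` (it is `⊤` if no finite cover exists). -/
noncomputable def coverNum {X : Type*} [MetricSpace X] (r : ℝ) (Ω : Set X) : ℕ∞ :=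
  sInf ((fun s : Finset X => (s.card : ℕ∞)) ''
    {s : Finset X | Ω ⊆ ⋃ x ∈ s, Metric.ball x r})

/-- The asymptotic dimension with base point `x`:
`d∞(X) = lim_{r→∞} limsup_{R→∞} log n_r(B(x,R)) / log R`; the limit in `r` exists since the
inner expression is nonincreasing in `r`, hence equals the infimum over `r > 0`. -/
noncomputable def asympDim {X : Type*} [MetricSpace X] (x : X) : EReal :=
  ⨅ (r : ℝ) (_ : 0 < r),
    Filter.limsup (fun R : ℝ => ((Real.log R)⁻¹ : EReal) * elog (coverNum r (Metric.ball x R)))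
      Filter.atTop

/-- The asymptotic dimension of a metric space (independent of the base point). -/
noncomputable def asympDimSpace (X : Type*) [MetricSpace X] : EReal :=
  ⨆ x : X, asympDim x

/-- A uniformly bounded Borel measure: for every `r > 0` the volumes of balls of radius `r`
are bounded away from `0` and from `∞`, uniformly in the centre. -/
def UnifBounded {X : Type*} [MetricSpace X] [MeasurableSpace X]
    (μ : MeasureTheory.Measure X) : Prop :=
  ∀ r : ℝ, 0 < r →
    (0 < ⨅ x : X, μ (Metric.ball x r)) ∧ (⨆ x : X, μ (Metric.ball x r)) < ⊤

/-- Logarithm of an extended nonnegative real, valued in `EReal` (`⊤` for `⊤`). -/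
noncomputable def elogENN (t : ENNReal) : EReal :=
  if t = ⊤ then ⊤ else ((Real.log t.toReal : ℝ) : EReal)


open MeasureTheory
open scoped ENNReal NNReal

section Aux

variable {X : Type*} [MetricSpace X]

lemma coverNum_le {r : ℝ} {Ω : Set X} {s : Finset X}
    (h : Ω ⊆ ⋃ y ∈ s, Metric.ball y r) : coverNum r Ω ≤ (s.card : ℕ∞) :=
  sInf_le ⟨s, h, rfl⟩

lemma coverNum_exists {r : ℝ} {Ω : Set X} (h : coverNum r Ω ≠ ⊤) :
    ∃ s : Finset X, (Ω ⊆ ⋃ y ∈ s, Metric.ball y r) ∧ (s.card : ℕ∞) = coverNum r Ω := by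
  have hne : ((fun s : Finset X => (s.card : ℕ∞)) ''
      {s : Finset X | Ω ⊆ ⋃ y ∈ s, Metric.ball y r}).Nonempty := by
    by_contra hc
    rw [Set.not_nonempty_iff_eq_empty] at hc
    exact h (by rw [coverNum, hc, sInf_empty])
  obtain ⟨s, hs, hcard⟩ := csInf_mem hne
  exact ⟨s, hs, hcard⟩

lemma one_le_coverNum {r : ℝ} {Ω : Set X} (h : Ω.Nonempty) : 1 ≤ coverNum r Ω := by
  by_contra hc
  push_neg at hc
  have h0 : coverNum r Ω = 0 := by
    exact le_antisymm (Order.le_of_lt_succ (by simpa using hc)) bot_le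
  obtain ⟨s, hs, hcard⟩ := coverNum_exists (h0 ▸ (by simp : (0:ℕ∞) ≠ ⊤))
  rw [h0] at hcard
  have : s = ∅ := by
    simpa using hcard
  rw [this] at hs
  simp at hs
  rw [hs] at h
  exact Set.not_nonempty_empty h

end Aux
section Aux2

variable {X : Type*} [MetricSpace X] [MeasurableSpace X] [BorelSpace X]

lemma measure_le_coverNum (μ : Measure X) {r : ℝ} (Ω : Set X)
    (hpos : 0 < ⨆ y : X, μ (Metric.ball y r)) :
    μ Ω ≤ (coverNum r Ω : ℝ≥0∞) * ⨆ y : X, μ (Metric.ball y r) := by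
  by_cases h : coverNum r Ω = ⊤
  · rw [h, ENat.toENNReal_top, ENNReal.top_mul hpos.ne']
    exact le_top
  · obtain ⟨s, hs, hcard⟩ := coverNum_exists h
    calc μ Ω ≤ μ (⋃ y ∈ s, Metric.ball y r) := measure_mono hs
      _ ≤ ∑ y ∈ s, μ (Metric.ball y r) := measure_biUnion_finset_le s _
      _ ≤ ∑ _y ∈ s, ⨆ z : X, μ (Metric.ball z r) :=
          Finset.sum_le_sum fun y _ => le_iSup (fun z : X => μ (Metric.ball z r)) y
      _ = (s.card : ℝ≥0∞) * ⨆ z : X, μ (Metric.ball z r) := by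
          rw [Finset.sum_const, nsmul_eq_mul]
      _ = (coverNum r Ω : ℝ≥0∞) * ⨆ z : X, μ (Metric.ball z r) := by
          rw [← hcard]; norm_cast

lemma coverNum_mul_le_measure (μ : Measure X) {r R : ℝ} (hr : 0 < r) (x : X) :
    (coverNum r (Metric.ball x R) : ℝ≥0∞) * (⨅ y : X, μ (Metric.ball y (r/2)))
      ≤ μ (Metric.ball x (R + r/2)) := by
  set c := ⨅ y : X, μ (Metric.ball y (r/2)) with hc
  by_cases hc0 : c = 0
  · rw [hc0, mul_zero]; exact zero_le
  by_cases htop : μ (Metric.ball x (R + r/2)) = ⊤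
  · rw [htop]; exact le_top
  -- Zorn: maximal r-separated subset of ball x R
  set S : Set (Set X) := {M : Set X | M ⊆ Metric.ball x R ∧
    M.Pairwise fun a b => r ≤ dist a b} with hS
  obtain ⟨M, hM⟩ : ∃ M, Maximal (· ∈ S) M := by
    apply zorn_subset
    intro C hCS hchain
    refine ⟨⋃₀ C, ⟨?_, ?_⟩, fun s hs => subset_sUnion_of_mem hs⟩
    · exact sUnion_subset fun s hs => (hCS hs).1
    · intro a ha b hb hab
      obtain ⟨s, hsC, has⟩ := ha
      obtain ⟨t, htC, hbt⟩ := hb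
      rcases hchain.total hsC htC with hst | hts
      · exact (hCS htC).2 (hst has) hbt hab
      · exact (hCS hsC).2 has (hts hbt) hab
  obtain ⟨⟨hMsub, hMsep⟩, hMmax⟩ := hM
  -- the balls of radius r around M cover ball x R
  have hcover : Metric.ball x R ⊆ ⋃ m ∈ M, Metric.ball m r := by
    intro z hz
    by_cases hzM : z ∈ M
    · exact Set.mem_biUnion hzM (by simpa using hr)
    by_contra hznot
    simp only [Set.mem_iUnion, Metric.mem_ball, not_exists] at hznot
    have : insert z M ∈ S := by
      constructor
      · exact Set.insert_subset hz hMsub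
      · intro a ha b hb hab
        rcases ha with rfl | haM
        · rcases hb with rfl | hbM
          · exact absurd rfl hab
          · have := hznot b hbM
            rw [dist_comm] at this ⊢
            push_neg at this
            simpa using this
        · rcases hb with rfl | hbM
          · have := hznot a haM
            push_neg at this
            rw [dist_comm]
            simpa using this
          · exact hMsep haM hbM hab
    have := hMmax this (Set.subset_insert z M)
    exact hzM (this (Set.mem_insert z M))
  -- disjoint balls of radius r/2 around points of M
  have hdisj : M.Pairwise fun a b => Disjoint (Metric.ball a (r/2)) (Metric.ball b (r/2)) := by
    intro a ha b hb hab
    exact Metric.ball_disjoint_ball (by linarith [hMsep ha hb hab])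
  have hsubball : ∀ m ∈ M, Metric.ball m (r/2) ⊆ Metric.ball x (R + r/2) := by
    intro m hm z hz
    have h1 : dist m x < R := hMsub hm
    have h2 : dist z m < r/2 := hz
    calc dist z x ≤ dist z m + dist m x := dist_triangle z m x
      _ < r/2 + R := by linarith
      _ = R + r/2 := by ring
  -- every finset inside M has card * c ≤ μ (big ball)
  have hkey : ∀ t : Finset X, ↑t ⊆ M → (t.card : ℝ≥0∞) * c ≤ μ (Metric.ball x (R + r/2)) := by
    intro t ht
    have : (t.card : ℝ≥0∞) * c ≤ ∑ m ∈ t, μ (Metric.ball m (r/2)) := by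
      rw [← nsmul_eq_mul]
      exact Finset.card_nsmul_le_sum t _ c fun m _ => iInf_le (fun y : X => μ (Metric.ball y (r/2))) m
    refine this.trans ?_
    rw [← measure_biUnion_finset ?_ fun m _ => measurableSet_ball]
    · exact measure_mono (Set.iUnion₂_subset fun m hm => hsubball m (ht hm))
    · intro a ha b hb hab
      exact hdisj (ht ha) (ht hb) hab
  -- M is finite
  rcases Set.eq_empty_or_nonempty (Metric.ball x R) with hball | hball
  · have h0 : coverNum r (Metric.ball x R) = 0 := by
      have := coverNum_le (r := r) (Ω := Metric.ball x R) (s := (∅ : Finset X))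
        (by rw [hball]; simp)
      simpa using this
    rw [h0]
    simp
  have hR0 : 0 < R := Metric.nonempty_ball.1 hball
  have hctop : c < ⊤ := by
    calc c ≤ μ (Metric.ball x (r/2)) := iInf_le _ x
      _ ≤ μ (Metric.ball x (R + r/2)) := measure_mono (Metric.ball_subset_ball (by linarith))
      _ < ⊤ := lt_top_iff_ne_top.2 htop
  have hMfin : M.Finite := by
    by_contra hinf
    have hinf' : M.Infinite := hinf
    obtain ⟨n, hn⟩ := ENNReal.exists_nat_gt (r := μ (Metric.ball x (R + r/2)) / c)
      (ENNReal.div_lt_top htop hc0).ne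
    obtain ⟨t, htsub, htcard⟩ := hinf'.exists_subset_card_eq n
    have hlt : μ (Metric.ball x (R + r/2)) < (n : ℝ≥0∞) * c := by
      rw [← ENNReal.div_lt_iff (Or.inl hc0) (Or.inl hctop.ne)]
      exact hn
    rw [← htcard] at hlt
    exact absurd (hkey t htsub) (not_le.2 hlt)
  -- conclude
  have hcov2 : Metric.ball x R ⊆ ⋃ m ∈ hMfin.toFinset, Metric.ball m r := by
    intro z hz
    obtain ⟨m, hm, hzm⟩ := Set.mem_iUnion₂.1 (hcover hz)
    exact Set.mem_biUnion (hMfin.mem_toFinset.2 hm) hzm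
  calc (coverNum r (Metric.ball x R) : ℝ≥0∞) * c
      ≤ (hMfin.toFinset.card : ℝ≥0∞) * c := by
        gcongr
        exact_mod_cast ENat.toENNReal_le.2 (coverNum_le hcov2)
    _ ≤ μ (Metric.ball x (R + r/2)) := hkey hMfin.toFinset (by simp)

end Aux2

section Analytic

lemma inv_mul_le_ereal {x w : ℝ} (hx : 0 < x) {y : EReal}
    (h : y ≤ ((x * w : ℝ) : EReal)) :
    ((x⁻¹ : ℝ) : EReal) * y ≤ (w : EReal) := by
  have h1 : ((x⁻¹:ℝ) : EReal) * y ≤ ((x⁻¹:ℝ):EReal) * ((x*w:ℝ):EReal) :=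
    mul_le_mul_of_nonneg_left h
      (by exact_mod_cast (inv_nonneg.2 hx.le) : (0:EReal) ≤ ((x⁻¹:ℝ):EReal))
  refine h1.trans ?_
  rw [← EReal.coe_mul]
  apply le_of_eq
  congr 1
  field_simp

lemma lt_of_inv_mul_lt {x b : ℝ} (hx : 0 < x) {y : EReal}
    (h : ((x⁻¹ : ℝ) : EReal) * y < (b : EReal)) : y < ((x * b : ℝ) : EReal) := by
  induction y using EReal.rec with
  | bot => exact EReal.bot_lt_coe _
  | coe t =>
    rw [← EReal.coe_mul, EReal.coe_lt_coe_iff] at h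
    rw [EReal.coe_lt_coe_iff]
    have h2 := mul_lt_mul_of_pos_left h hx
    rwa [← mul_assoc, mul_inv_cancel₀ hx.ne', one_mul] at h2
  | top =>
    rw [EReal.coe_mul_top_of_pos (inv_pos.2 hx)] at h
    exact absurd h (by simp)

lemma limsup_le_of_bound {v : ℝ → EReal} {a b C : ℝ} (ha : 0 < a)
    (h : ∀ᶠ R in atTop, v R ≤ ((b * Real.log (a * R) + C : ℝ) : EReal)) :
    Filter.limsup (fun R : ℝ => ((Real.log R)⁻¹ : EReal) * v R) Filter.atTop ≤ (b : EReal) := by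
  set h₀ : ℝ → ℝ := fun R => (Real.log R)⁻¹ * (b * Real.log (a * R) + C) with hh₀
  have hlim : Tendsto h₀ atTop (nhds b) := by
    have h1 : ∀ᶠ R in atTop, b + (b * Real.log a + C) * (Real.log R)⁻¹ = h₀ R := by
      filter_upwards [eventually_gt_atTop 1] with R hR
      have hR0 : (0:ℝ) < R := by linarith
      have hlogne : Real.log R ≠ 0 := (Real.log_pos hR).ne'
      rw [hh₀]
      simp only []
      rw [Real.log_mul ha.ne' hR0.ne']
      field_simp
      ring
    refine Tendsto.congr' h1 ?_
    have h2 : Tendsto (fun R : ℝ => (Real.log R)⁻¹) atTop (nhds 0) :=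
      Real.tendsto_log_atTop.inv_tendsto_atTop
    simpa using tendsto_const_nhds.add (h2.const_mul (b * Real.log a + C))
  have hlim' : Tendsto (fun R => ((h₀ R : ℝ) : EReal)) atTop (nhds (b : EReal)) :=
    (continuous_coe_real_ereal.tendsto _).comp hlim
  have h3 : ∀ᶠ R in atTop, ((Real.log R)⁻¹ : EReal) * v R ≤ ((h₀ R : ℝ) : EReal) := by
    filter_upwards [h, eventually_gt_atTop 1] with R hvR hR
    have hlogpos : 0 < Real.log R := Real.log_pos hR
    have heq : Real.log R * ((Real.log R)⁻¹ * (b * Real.log (a*R) + C))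
        = b * Real.log (a*R) + C := by field_simp
    exact inv_mul_le_ereal hlogpos (by rw [hh₀]; simp only []; rw [heq]; exact hvR)
  calc Filter.limsup (fun R : ℝ => ((Real.log R)⁻¹ : EReal) * v R) Filter.atTop
      ≤ Filter.limsup (fun R => ((h₀ R : ℝ) : EReal)) Filter.atTop := limsup_le_limsup h3
    _ = (b : EReal) := hlim'.limsup_eq

end Analytic


/-- Proposition 1.2.14: if `μ` is a uniformly bounded Borel measure on `X`, then
`d∞(X) = limsup_{R→∞} log μ(B(x,R)) / log R`. -/
theorem stmt16 {X : Type*} [MetricSpace X] [MeasurableSpace X] [BorelSpace X] [Nonempty X]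
    (μ : MeasureTheory.Measure X) (hμ : UnifBounded μ) (x : X) :
    asympDim x =
      Filter.limsup (fun R : ℝ => ((Real.log R)⁻¹ : EReal) * elogENN (μ (Metric.ball x R)))
        Filter.atTop := by
  set F : ℝ → EReal := fun R => ((Real.log R)⁻¹ : EReal) * elogENN (μ (Metric.ball x R)) with hF
  apply le_antisymm
  · -- asympDim x ≤ limsup F
    have h1 : asympDim x ≤ Filter.limsup
        (fun R : ℝ => ((Real.log R)⁻¹ : EReal) * elog (coverNum 1 (Metric.ball x R)))
        Filter.atTop := by
      unfold asympDim
      exact iInf_le_of_le 1 (iInf_le_of_le one_pos le_rfl)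
    refine h1.trans ?_
    rw [← EReal.le_of_forall_lt_iff_le]
    intro b hb
    have hev : ∀ᶠ R in atTop, F R < (b : EReal) := eventually_lt_of_limsup_lt hb
    have h2R : Tendsto (fun R : ℝ => 2 * R) atTop atTop :=
      (tendsto_id (α := ℝ)).const_mul_atTop two_pos
    have hev2 : ∀ᶠ R : ℝ in atTop, F (2 * R) < (b : EReal) := h2R.eventually hev
    -- constants
    have hc := hμ (1/2 : ℝ) (by norm_num)
    set c : ℝ≥0∞ := ⨅ y : X, μ (Metric.ball y ((1:ℝ)/2)) with hcdef
    have hc0 : c ≠ 0 := hc.1.ne'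
    have hctop : c ≠ ⊤ :=
      (lt_of_le_of_lt ((iInf_le _ x).trans
        (le_iSup (fun y : X => μ (Metric.ball y ((1:ℝ)/2))) x)) hc.2).ne
    have hcr : 0 < c.toReal := ENNReal.toReal_pos hc0 hctop
    apply limsup_le_of_bound (C := -Real.log c.toReal) two_pos
    filter_upwards [hev2, eventually_ge_atTop (1:ℝ)] with R hFR hR1
    have hR0 : (0:ℝ) < R := by linarith
    have hlog2R : 0 < Real.log (2 * R) := Real.log_pos (by linarith)
    simp only [hF] at hFR
    have He := lt_of_inv_mul_lt hlog2R hFR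
    have hμtop : μ (Metric.ball x (2 * R)) ≠ ⊤ := by
      intro h
      rw [elogENN, if_pos h] at He
      exact absurd He (by simp)
    rw [elogENN, if_neg hμtop] at He
    rw [EReal.coe_lt_coe_iff] at He
    -- cover number bound
    have hB : (coverNum 1 (Metric.ball x R) : ℝ≥0∞) * c ≤ μ (Metric.ball x (2 * R)) := by
      refine (coverNum_mul_le_measure μ one_pos x).trans ?_
      exact measure_mono (Metric.ball_subset_ball (by linarith))
    have hcovtop : coverNum 1 (Metric.ball x R) ≠ ⊤ := by
      intro h
      rw [h, ENat.toENNReal_top, ENNReal.top_mul hc0] at hB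
      exact hμtop (top_le_iff.1 hB)
    set n : ℕ := (coverNum 1 (Metric.ball x R)).toNat with hndef
    have hn : coverNum 1 (Metric.ball x R) = (n : ℕ∞) := (ENat.coe_toNat hcovtop).symm
    have hn1 : 1 ≤ n := by
      have := one_le_coverNum (r := (1:ℝ)) (Ω := Metric.ball x R) (Metric.nonempty_ball.2 hR0)
      rw [hn] at this
      exact_mod_cast this
    have hnpos : (0:ℝ) < (n:ℝ) := by exact_mod_cast hn1
    -- real inequality
    have hreal : (n : ℝ) * c.toReal ≤ (μ (Metric.ball x (2 * R))).toReal := by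
      rw [hn] at hB
      have hB' : (n : ℝ≥0∞) * c ≤ μ (Metric.ball x (2 * R)) := by
        rwa [ENat.toENNReal_coe] at hB
      have := ENNReal.toReal_mono hμtop hB'
      rwa [ENNReal.toReal_mul, ENNReal.toReal_natCast] at this
    have hμpos : 0 < (μ (Metric.ball x (2 * R))).toReal :=
      lt_of_lt_of_le (by positivity) hreal
    have hlogn : Real.log (n : ℝ) ≤ Real.log (μ (Metric.ball x (2 * R))).toReal
        - Real.log c.toReal := by
      have h3 : Real.log ((n:ℝ) * c.toReal) ≤ Real.log (μ (Metric.ball x (2 * R))).toReal :=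
        Real.log_le_log (by positivity) hreal
      rw [Real.log_mul hnpos.ne' hcr.ne'] at h3
      linarith
    -- conclude
    rw [hn, elog, if_neg (by simp : (n : ℕ∞) ≠ ⊤)]
    simp only [ENat.toNat_coe]
    rw [EReal.coe_le_coe_iff]
    have : Real.log (2 * R) * b = b * Real.log (2 * R) := mul_comm _ _
    linarith
  · -- limsup F ≤ asympDim x
    unfold asympDim
    refine le_iInf fun r => le_iInf fun hr => ?_
    rw [← EReal.le_of_forall_lt_iff_le]
    intro b hb
    have hev : ∀ᶠ R in atTop,
        ((Real.log R)⁻¹ : EReal) * elog (coverNum r (Metric.ball x R)) < (b : EReal) :=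
      eventually_lt_of_limsup_lt hb
    -- constants
    have hCr := hμ r hr
    set C : ℝ≥0∞ := ⨆ y : X, μ (Metric.ball y r) with hCdef
    have hCtop : C ≠ ⊤ := hCr.2.ne
    have hC0 : C ≠ 0 :=
      (lt_of_lt_of_le hCr.1 ((iInf_le _ x).trans
        (le_iSup (fun y : X => μ (Metric.ball y r)) x))).ne'
    have hCreal : 0 < C.toReal := ENNReal.toReal_pos hC0 hCtop
    have hc1 := hμ 1 one_pos
    have hμlow : ∀ R : ℝ, 1 ≤ R → 0 < μ (Metric.ball x R) := fun R hR =>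
      lt_of_lt_of_le hc1.1 ((iInf_le _ x).trans
        (measure_mono (Metric.ball_subset_ball hR)))
    rw [hF]
    apply limsup_le_of_bound (C := Real.log C.toReal) one_pos
    filter_upwards [hev, eventually_gt_atTop (1:ℝ)] with R hGR hR1
    have hlogR : 0 < Real.log R := Real.log_pos hR1
    have He := lt_of_inv_mul_lt hlogR hGR
    have hcovtop : coverNum r (Metric.ball x R) ≠ ⊤ := by
      intro h
      rw [h, elog, if_pos rfl] at He
      exact absurd He (by simp)
    set n : ℕ := (coverNum r (Metric.ball x R)).toNat with hndef
    have hn : coverNum r (Metric.ball x R) = (n : ℕ∞) := (ENat.coe_toNat hcovtop).symm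
    have hn1 : 1 ≤ n := by
      have := one_le_coverNum (r := r) (Ω := Metric.ball x R) (Metric.nonempty_ball.2 (by linarith : (0:ℝ) < R))
      rw [hn] at this
      exact_mod_cast this
    have hnpos : (0:ℝ) < (n:ℝ) := by exact_mod_cast hn1
    rw [hn, elog, if_neg (by simp : (n : ℕ∞) ≠ ⊤)] at He
    simp only [ENat.toNat_coe] at He
    rw [EReal.coe_lt_coe_iff] at He
    -- measure bound
    have hA : μ (Metric.ball x R) ≤ (n : ℝ≥0∞) * C := by
      have h4 := measure_le_coverNum μ (Metric.ball x R)
        (r := r) (pos_iff_ne_zero.2 hC0)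
      rw [hn, ENat.toENNReal_coe] at h4
      exact h4
    have hμtop : μ (Metric.ball x R) ≠ ⊤ := by
      intro h
      rw [h] at hA
      exact absurd (top_le_iff.1 hA) (ENNReal.mul_ne_top (by simp) hCtop)
    have hreal : (μ (Metric.ball x R)).toReal ≤ (n : ℝ) * C.toReal := by
      have := ENNReal.toReal_mono (ENNReal.mul_ne_top (by simp) hCtop) hA
      rwa [ENNReal.toReal_mul, ENNReal.toReal_natCast] at this
    have hμpos : 0 < (μ (Metric.ball x R)).toReal :=
      ENNReal.toReal_pos (hμlow R hR1.le).ne' hμtop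
    have hlogμ : Real.log (μ (Metric.ball x R)).toReal
        ≤ Real.log (n : ℝ) + Real.log C.toReal := by
      have h3 : Real.log (μ (Metric.ball x R)).toReal ≤ Real.log ((n:ℝ) * C.toReal) :=
        Real.log_le_log hμpos hreal
      rwa [Real.log_mul hnpos.ne' hCreal.ne'] at h3
    rw [elogENN, if_neg hμtop, EReal.coe_le_coe_iff, one_mul]
    nlinarith [He, hlogR]
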